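/- (Marked Schreyer theorem) Let J ⊂ S be a quasi-stable monomial ideal with Pommaret basis P(J) = {x^{α(1)},…,x^{α(m)}} and G = {f_{α(1)},…,f_{α(m)}} a P(J)-marked basis. Let U = ⊕_{l=1}^m (X_nonmult(x^{α(l)})) e_l ⊆ S^m_d, d = (deg x^{α(1)},…,deg x^{α(m)}), be the quasi-stable module whose Pommaret basis is {x_i e_l : x_i nonmultiplicative for x^{α(l)}}. Then the set G_Syz of syzygies S_{k;i} = x_i e_k − Σ_l P_l^{k;i} e_l is a P(U)-marked basis of the syzygy module Syz(G); in particular Syz(G) is generated by G_Syz. -/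

import Mathlib

set_option maxHeartbeats 1000000

open MvPolynomial

namespace MB

/-- Exponent (multi-index) of a term in the variables `x_0, …, x_n`. -/
abbrev Exp (n : ℕ) := Fin (n+1) →₀ ℕ

variable {n : ℕ}

/-- Total degree of a term. -/
def degE (α : Exp n) : ℕ := α.sum fun _ e => e

/-- `x_i` is a multiplicative variable for the term `x^α`, i.e. `x_i ≤ min(x^α)`. -/
def mult (α : Exp n) (i : Fin (n+1)) : Prop := ∀ j ∈ α.support, i ≤ j

/-- Every variable occurring in `x^δ` is multiplicative for `x^α`. -/
def multExp (α δ : Exp n) : Prop := ∀ i ∈ δ.support, mult α i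

/-- Pommaret cone of a term. -/
def pommaretCone (α : Exp n) : Set (Exp n) := {γ | ∃ δ, multExp α δ ∧ γ = α + δ}

/-- A set of terms is (the set of terms of) a monomial ideal. -/
def IsMonomialIdeal (T : Set (Exp n)) : Prop := ∀ α ∈ T, ∀ β, α + β ∈ T

/-- `P` is a Pommaret basis of the set of terms `T`: the terms of `T` are the
disjoint union of the Pommaret cones of the elements of `P`. -/
def IsPommaretBasis (P : Finset (Exp n)) (T : Set (Exp n)) : Prop :=
  (∀ γ, γ ∈ T ↔ ∃ α ∈ P, γ ∈ pommaretCone α) ∧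
  ∀ γ : Exp n, ∀ α ∈ P, ∀ β ∈ P, γ ∈ pommaretCone α → γ ∈ pommaretCone β → α = β

/-- Lexicographic order on terms (with `x_n > … > x_0` significance). -/
def lexLt (η δ : Exp n) : Prop := ∃ i, η i < δ i ∧ ∀ j, i < j → η j = δ j

/-- Terms of the saturation `(J : (x_0,…,x_n)^∞)` of a monomial ideal. -/
def satTerms (T : Set (Exp n)) : Set (Exp n) :=
  {α | ∃ j : ℕ, ∀ β : Exp n, degE β = j → α + β ∈ T}

section ModuleDefs

variable (A : Type*) [CommRing A] {κ : Type*} [Fintype κ] [DecidableEq κ]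

/-- The term `x^α e_k` of the free module. -/
noncomputable def termV (α : Exp n) (k : κ) : κ → MvPolynomial (Fin (n+1)) A :=
  Pi.single k (monomial α 1)

variable {A}

/-- Homogeneity of degree `s` in `S^m_d` (with weight vector `d`). -/
def IsHomogV (d : κ → ℤ) (f : κ → MvPolynomial (Fin (n+1)) A) (s : ℤ) : Prop :=
  ∀ k, ∀ β ∈ (f k).support, (degE β : ℤ) + d k = s

variable (A)

/-- The degree-`s` component `(S^m_d)_s` as an `A`-submodule. -/
noncomputable def homogCompV (d : κ → ℤ) (s : ℤ) :
    Submodule A (κ → MvPolynomial (Fin (n+1)) A) where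
  carrier := {f | IsHomogV d f s}
  add_mem' := by
    intro f g hf hg k β hβ
    rcases Finset.mem_union.mp (MvPolynomial.support_add hβ) with h | h
    · exact hf k β h
    · exact hg k β h
  zero_mem' := by intro k β hβ; simp at hβ
  smul_mem' := by
    intro a f hf k β hβ
    exact hf k β (MvPolynomial.support_smul hβ)

/-- The set `N(U)` of terms of `S^m_d` not belonging to the monomial module `U = ⊕ J^(k) e_k`. -/
def NUTerms (J : κ → Set (Exp n)) : Set (κ → MvPolynomial (Fin (n+1)) A) :=
  {v | ∃ k, ∃ α, α ∉ J k ∧ v = termV A α k}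

/-- The degree-`s` part `N(U)_s`. -/
def NUTermsDeg (d : κ → ℤ) (J : κ → Set (Exp n)) (s : ℤ) :
    Set (κ → MvPolynomial (Fin (n+1)) A) :=
  {v | ∃ k, ∃ α, α ∉ J k ∧ (degE α : ℤ) + d k = s ∧ v = termV A α k}

variable {A}

/-- A `P(U)`-marked set: for each `x^α e_k` with `α ∈ P k`, the element `g α k` has
head term `x^α e_k` (coefficient `1`) and all other terms in `N(U)` of the same degree. -/
def IsMarkedSetV (d : κ → ℤ) (J : κ → Set (Exp n)) (P : κ → Finset (Exp n))
    (g : Exp n → κ → (κ → MvPolynomial (Fin (n+1)) A)) : Prop :=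
  ∀ k, ∀ α ∈ P k, ∀ l, ∀ β ∈ ((g α k - termV A α k) l).support,
    β ∉ J l ∧ (degE β : ℤ) + d l = (degE α : ℤ) + d k

/-- The underlying set of elements of the marked set `G`. -/
def GSet (P : κ → Finset (Exp n)) (g : Exp n → κ → (κ → MvPolynomial (Fin (n+1)) A)) :
    Set (κ → MvPolynomial (Fin (n+1)) A) :=
  {v | ∃ k, ∃ α ∈ P k, v = g α k}

/-- The set `G^(s)` of multiplicative multiples of elements of `G` of degree `s`. -/
def GSdeg (d : κ → ℤ) (P : κ → Finset (Exp n))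
    (g : Exp n → κ → (κ → MvPolynomial (Fin (n+1)) A)) (s : ℤ) :
    Set (κ → MvPolynomial (Fin (n+1)) A) :=
  {v | ∃ k, ∃ α ∈ P k, ∃ δ : Exp n, multExp α δ ∧
    (degE δ : ℤ) + (degE α : ℤ) + d k = s ∧ v = (monomial δ (1:A)) • g α k}

/-- The `S`-submodule `⟨G⟩` generated by the marked set. -/
noncomputable def GmodS (P : κ → Finset (Exp n))
    (g : Exp n → κ → (κ → MvPolynomial (Fin (n+1)) A)) :
    Submodule (MvPolynomial (Fin (n+1)) A) (κ → MvPolynomial (Fin (n+1)) A) :=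
  Submodule.span _ (GSet P g)

/-- The degree-`s` component `⟨G⟩_s` as an `A`-submodule. -/
noncomputable def GmodDeg (d : κ → ℤ) (P : κ → Finset (Exp n))
    (g : Exp n → κ → (κ → MvPolynomial (Fin (n+1)) A)) (s : ℤ) :
    Submodule A (κ → MvPolynomial (Fin (n+1)) A) :=
  (GmodS P g).restrictScalars A ⊓ homogCompV A d s

/-- `G` is a marked basis: `(S^m_d)_s = ⟨G⟩_s ⊕ ⟨N(U)_s⟩^A` for every degree `s`. -/
def MarkedBasisProp (d : κ → ℤ) (J : κ → Set (Exp n)) (P : κ → Finset (Exp n))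
    (g : Exp n → κ → (κ → MvPolynomial (Fin (n+1)) A)) : Prop :=
  ∀ s : ℤ,
    homogCompV A d s = GmodDeg d P g s ⊔ Submodule.span A (NUTermsDeg A d J s) ∧
    GmodDeg d P g s ⊓ Submodule.span A (NUTermsDeg A d J s) = ⊥

/-- One step of the reduction relation `→_G`. -/
def RedStep (P : κ → Finset (Exp n)) (g : Exp n → κ → (κ → MvPolynomial (Fin (n+1)) A))
    (h h' : κ → MvPolynomial (Fin (n+1)) A) : Prop :=
  ∃ k, ∃ α ∈ P k, ∃ η : Exp n, multExp α η ∧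
    (h k).coeff (η + α) ≠ 0 ∧
    h' = h - ((h k).coeff (η + α)) • ((monomial η (1:A)) • g α k)

end ModuleDefs

section IdealDefs

variable {A : Type*} [CommRing A]

/-- A `P(J)`-marked set of polynomials. -/
def IsMarkedSetI (T : Set (Exp n)) (P : Finset (Exp n))
    (g : Exp n → MvPolynomial (Fin (n+1)) A) : Prop :=
  ∀ α ∈ P, ∀ β ∈ (g α - monomial α (1:A)).support, β ∉ T ∧ degE β = degE α

variable (A)

/-- The degree-`s` monomials not in `T`. -/
def NTermsDegI (T : Set (Exp n)) (s : ℕ) : Set (MvPolynomial (Fin (n+1)) A) :=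
  {p | ∃ β, β ∉ T ∧ degE β = s ∧ p = monomial β (1:A)}

variable {A}

/-- Degree-`s` part of the ideal generated by the marked set. -/
noncomputable def IdealDegI (P : Finset (Exp n)) (g : Exp n → MvPolynomial (Fin (n+1)) A)
    (s : ℕ) : Submodule A (MvPolynomial (Fin (n+1)) A) :=
  (Ideal.span (g '' ↑P)).restrictScalars A ⊓ homogeneousSubmodule (Fin (n+1)) A s

/-- A `P(J)`-marked basis of polynomials: `S_s = (G)_s ⊕ ⟨N(J)_s⟩^A` for all `s`. -/
def IsMarkedBasisI (T : Set (Exp n)) (P : Finset (Exp n))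
    (g : Exp n → MvPolynomial (Fin (n+1)) A) : Prop :=
  IsMarkedSetI T P g ∧ ∀ s : ℕ,
    homogeneousSubmodule (Fin (n+1)) A s
      = IdealDegI P g s ⊔ Submodule.span A (NTermsDegI A T s) ∧
    IdealDegI P g s ⊓ Submodule.span A (NTermsDegI A T s) = ⊥

/-- The polynomial `p` involves only multiplicative variables of `x^α`. -/
def multPoly (α : Exp n) (p : MvPolynomial (Fin (n+1)) A) : Prop :=
  ∀ β ∈ p.support, multExp α β

end IdealDefs

section SyzDefs

variable {A : Type*} [CommRing A]

/-- The map `(c_l) ↦ Σ_l c_l f_{α(l)}` whose kernel is `Syz(G)`. -/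
noncomputable def syzMap (P : Finset (Exp n)) (g : Exp n → MvPolynomial (Fin (n+1)) A) :
    (↥P → MvPolynomial (Fin (n+1)) A) →ₗ[MvPolynomial (Fin (n+1)) A]
      MvPolynomial (Fin (n+1)) A where
  toFun c := ∑ l : ↥P, c l * g l.1
  map_add' c c' := by simp [add_mul, Finset.sum_add_distrib]
  map_smul' a c := by simp [Finset.mul_sum, mul_assoc]

/-- Weight vector for the syzygy module: `d_l = deg x^{α(l)}`. -/
def ddeg (P : Finset (Exp n)) : ↥P → ℤ := fun l => (degE l.1 : ℤ)

/-- Terms of the monomial ideal generated by the nonmultiplicative variables of `x^{α(l)}`. -/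
def Jsyz (P : Finset (Exp n)) : ↥P → Set (Exp n) :=
  fun l => {β | ∃ i ∈ β.support, ¬ mult (l : Exp n) i}

open Classical in
/-- The claimed Pommaret basis `{x_i e_l : x_i nonmultiplicative for x^{α(l)}}`. -/
noncomputable def Psyz (P : Finset (Exp n)) : ↥P → Finset (Exp n) := fun l =>
  (Finset.univ.filter fun i : Fin (n+1) => ¬ mult (l : Exp n) i).image
    fun i => Finsupp.single i 1

open Classical in
/-- The syzygy `S_{k;i} = x_i e_k − Σ_l P_l^{k;i} e_l`. -/
noncomputable def Ssyz (P : Finset (Exp n))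
    (Pc : ↥P → Fin (n+1) → ↥P → MvPolynomial (Fin (n+1)) A)
    (k : ↥P) (i : Fin (n+1)) : ↥P → MvPolynomial (Fin (n+1)) A :=
  fun l => (if l = k then (X i : MvPolynomial (Fin (n+1)) A) else 0) - Pc k i l

/-- The set `G_Syz^(s)`. -/
def GSyzDeg (P : Finset (Exp n))
    (Pc : ↥P → Fin (n+1) → ↥P → MvPolynomial (Fin (n+1)) A) (s : ℤ) :
    Set (↥P → MvPolynomial (Fin (n+1)) A) :=
  {v | ∃ k : ↥P, ∃ i : Fin (n+1), ¬ mult (k : Exp n) i ∧ ∃ δ : Exp n,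
    (∀ j ∈ δ.support, j ≤ i) ∧ (degE δ : ℤ) + 1 + ddeg P k = s ∧
    v = (monomial δ (1:A)) • Ssyz P Pc k i}

end SyzDefs
section Infra

variable {n : ℕ}

theorem degE_eq_sum (a : Exp n) : degE a = ∑ j, a j := by
  classical
  exact Finsupp.sum_fintype _ _ (fun _ => rfl)

theorem degE_add (a b : Exp n) : degE (a + b) = degE a + degE b := by
  simp [degE_eq_sum, Finset.sum_add_distrib]

theorem degE_single (i : Fin (n+1)) : degE (Finsupp.single i (1:ℕ)) = 1 := by
  classical
  simp [degE_eq_sum, Finsupp.single_apply]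

theorem apply_le_degE (a : Exp n) (j : Fin (n+1)) : a j ≤ degE a := by
  rw [degE_eq_sum]
  exact Finset.single_le_sum (fun _ _ => Nat.zero_le _) (Finset.mem_univ j)

theorem degE_eq_degree (a : Exp n) : degE a = a.degree := by
  rfl

theorem lexLt_trichotomy (η δ : Exp n) : lexLt η δ ∨ η = δ ∨ lexLt δ η := by
  classical
  by_cases h : η = δ
  · exact Or.inr (Or.inl h)
  have hne : ((η.support ∪ δ.support).filter fun j => η j ≠ δ j).Nonempty := by
    by_contra hc
    apply h
    ext j
    by_contra hj
    exact hc ⟨j, Finset.mem_filter.mpr ⟨by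
      rcases eq_or_ne (η j) 0 with h0 | h0
      · exact Finset.mem_union_right _ (Finsupp.mem_support_iff.mpr (by omega))
      · exact Finset.mem_union_left _ (Finsupp.mem_support_iff.mpr h0), hj⟩⟩
  obtain ⟨i, hi, hmax⟩ := Finset.exists_max_image _ id hne
  have hi' := Finset.mem_filter.mp hi
  have habove : ∀ j, i < j → η j = δ j := by
    intro j hj
    by_contra hj'
    have : j ∈ (η.support ∪ δ.support).filter fun j => η j ≠ δ j := by
      refine Finset.mem_filter.mpr ⟨?_, hj'⟩
      rcases eq_or_ne (η j) 0 with h0 | h0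
      · exact Finset.mem_union_right _ (Finsupp.mem_support_iff.mpr (by omega))
      · exact Finset.mem_union_left _ (Finsupp.mem_support_iff.mpr h0)
    exact absurd (hmax j this) (by simpa using hj)
  rcases Nat.lt_or_ge (η i) (δ i) with hlt | hge
  · exact Or.inl ⟨i, hlt, habove⟩
  · refine Or.inr (Or.inr ⟨i, ?_, fun j hj => (habove j hj).symm⟩)
    omega

/-- the base-`B` evaluation measure on exponents -/
def muB (B : ℕ) (δ : Exp n) : ℕ := ∑ j : Fin (n+1), δ j * B ^ (j : ℕ)

theorem muB_aux (B : ℕ) (f : Fin (n+1) → ℕ) (hB : ∀ j, f j < B) :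
    ∀ i : ℕ, ∑ j ∈ Finset.univ.filter (fun j : Fin (n+1) => (j:ℕ) < i), f j * B ^ (j:ℕ) < B ^ i := by
  have hB1 : 1 ≤ B := Nat.one_le_iff_ne_zero.mpr (by intro h; have := hB 0; omega)
  intro i
  induction i with
  | zero =>
    have he : Finset.univ.filter (fun j : Fin (n+1) => (j:ℕ) < 0) = ∅ := by
      ext j; simp
    rw [he]
    simpa using Nat.zero_lt_one
  | succ i ih =>
    by_cases hin : i < n + 1
    · set i' : Fin (n+1) := ⟨i, hin⟩ with hi'
      have hsplit : Finset.univ.filter (fun j : Fin (n+1) => (j:ℕ) < i + 1)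
          = insert i' (Finset.univ.filter (fun j : Fin (n+1) => (j:ℕ) < i)) := by
        ext j
        simp only [Finset.mem_filter, Finset.mem_insert, Finset.mem_univ, true_and]
        constructor
        · intro hj
          rcases Nat.lt_or_ge (j:ℕ) i with h | h
          · exact Or.inr h
          · refine Or.inl (Fin.ext ?_)
            simp [hi']
            omega
        · rintro (rfl | hj)
          · simp [hi']
          · omega
      rw [hsplit, Finset.sum_insert (by simp [hi'])]
      have h1 : f i' * B ^ i + ∑ j ∈ Finset.univ.filter (fun j : Fin (n+1) => (j:ℕ) < i), f j * B ^ (j:ℕ)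
          < (f i' + 1) * B ^ i := by
        have h2 : (f i' + 1) * B ^ i = f i' * B ^ i + B ^ i := by ring
        omega
      calc f i' * B ^ (i':ℕ) + ∑ j ∈ Finset.univ.filter (fun j : Fin (n+1) => (j:ℕ) < i), f j * B ^ (j:ℕ)
          = f i' * B ^ i + ∑ j ∈ Finset.univ.filter (fun j : Fin (n+1) => (j:ℕ) < i), f j * B ^ (j:ℕ) := by rfl
        _ < (f i' + 1) * B ^ i := h1
        _ ≤ B * B ^ i := Nat.mul_le_mul_right _ (hB i')
        _ = B ^ (i+1) := by ring
    · have hsame : Finset.univ.filter (fun j : Fin (n+1) => (j:ℕ) < i + 1)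
          = Finset.univ.filter (fun j : Fin (n+1) => (j:ℕ) < i) := by
        ext j
        have := j.isLt
        simp only [Finset.mem_filter, Finset.mem_univ, true_and]
        omega
      rw [hsame]
      calc ∑ j ∈ Finset.univ.filter (fun j : Fin (n+1) => (j:ℕ) < i), f j * B ^ (j:ℕ)
          < B ^ i := ih
        _ ≤ B ^ (i+1) := Nat.pow_le_pow_right hB1 (by omega)

theorem muB_lt (B : ℕ) {η δ : Exp n} (hB : ∀ j, η j < B) (h : lexLt η δ) :
    muB B η < muB B δ := by
  classical
  obtain ⟨i, hi, habove⟩ := h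
  have hsplit : ∀ f : Fin (n+1) → ℕ, ∑ j : Fin (n+1), f j
      = (∑ j ∈ Finset.univ.filter (fun j : Fin (n+1) => j < i), f j) + f i
        + ∑ j ∈ Finset.univ.filter (fun j : Fin (n+1) => i < j), f j := by
    intro f
    rw [← Finset.sum_filter_add_sum_filter_not Finset.univ (fun j : Fin (n+1) => j < i)]
    have : Finset.univ.filter (fun j : Fin (n+1) => ¬ j < i)
        = insert i (Finset.univ.filter (fun j : Fin (n+1) => i < j)) := by
      ext j
      simp only [Finset.mem_filter, Finset.mem_insert, Finset.mem_univ, true_and, not_lt]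
      constructor
      · intro hj
        rcases eq_or_lt_of_le hj with h' | h'
        · exact Or.inl h'.symm
        · exact Or.inr h'
      · rintro (rfl | hj)
        · exact le_refl _
        · exact le_of_lt hj
    rw [this, Finset.sum_insert (by simp)]
    ring
  unfold muB
  rw [hsplit (fun j => η j * B ^ (j:ℕ)), hsplit (fun j => δ j * B ^ (j:ℕ))]
  have heqhigh : ∑ j ∈ Finset.univ.filter (fun j : Fin (n+1) => i < j), η j * B ^ (j:ℕ)
      = ∑ j ∈ Finset.univ.filter (fun j : Fin (n+1) => i < j), δ j * B ^ (j:ℕ) := by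
    apply Finset.sum_congr rfl
    intro j hj
    rw [habove j (Finset.mem_filter.mp hj).2]
  rw [heqhigh]
  have hlow : ∑ j ∈ Finset.univ.filter (fun j : Fin (n+1) => j < i), η j * B ^ (j:ℕ) < B ^ (i:ℕ) := by
    have := muB_aux B (fun j => η j) hB (i : ℕ)
    apply Nat.lt_of_le_of_lt _ this
    apply Finset.sum_le_sum_of_subset
    intro j hj
    simp only [Finset.mem_filter, Finset.mem_univ, true_and] at hj ⊢
    exact Fin.lt_iff_val_lt_val.mp hj
  have : η i * B ^ (i:ℕ) + B ^ (i:ℕ) ≤ δ i * B ^ (i:ℕ) := by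
    have h3 : (η i + 1) * B ^ (i:ℕ) ≤ δ i * B ^ (i:ℕ) := Nat.mul_le_mul_right _ (by omega)
    have h4 : (η i + 1) * B ^ (i:ℕ) = η i * B ^ (i:ℕ) + B ^ (i:ℕ) := by ring
    omega
  omega

end Infra
section Generic

variable {A : Type*} [CommRing A] {V : Type*} [AddCommGroup V] [Module A V]
  {ι : Type*} {b u : ι → V} {rank : ι → ℕ} {Ssub : ι → Set ι} {M : Type*} {D : ι → M}
  {φ : ι → V →ₗ[A] A} [DecidableEq ι]

theorem gen_indep
    (hφ : ∀ i j, φ i (b j) = if i = j then 1 else 0)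
    (hrank : ∀ i, ∀ j ∈ Ssub i, rank j < rank i)
    (hu : ∀ i, u i - b i ∈ Submodule.span A (b '' Ssub i))
    {σ : Type*} (t : Finset σ) (f : σ → ι) (hf : Set.InjOn f t)
    (a : σ → A) (h : ∑ x ∈ t, a x • u (f x) = 0) : ∀ x ∈ t, a x = 0 := by
  classical
  by_contra hc
  push_neg at hc
  obtain ⟨x1, hx1t, hx1⟩ := hc
  have hne : (t.filter fun x => a x ≠ 0).Nonempty := ⟨x1, Finset.mem_filter.mpr ⟨hx1t, hx1⟩⟩
  obtain ⟨x0, hx0, hmax⟩ := Finset.exists_max_image _ (fun x => rank (f x)) hne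
  have hx0t : x0 ∈ t := (Finset.mem_filter.mp hx0).1
  have hx0a : a x0 ≠ 0 := (Finset.mem_filter.mp hx0).2
  have key : ∀ x ∈ t, a x • (φ (f x0)) (u (f x)) = if x = x0 then a x else 0 := by
    intro x hxt
    by_cases hax : a x = 0
    · simp [hax]
    · have hxf : x ∈ t.filter fun x => a x ≠ 0 := Finset.mem_filter.mpr ⟨hxt, hax⟩
      have hrle : rank (f x) ≤ rank (f x0) := hmax x hxf
      have htail : (φ (f x0)) (u (f x) - b (f x)) = 0 := by
        have hker : Submodule.span A (b '' Ssub (f x)) ≤ LinearMap.ker (φ (f x0)) := by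
          rw [Submodule.span_le]
          rintro v ⟨j, hj, rfl⟩
          have : φ (f x0) (b j) = if f x0 = j then 1 else 0 := hφ _ _
          simp only [SetLike.mem_coe, LinearMap.mem_ker]
          rw [this, if_neg]
          rintro rfl
          exact absurd (hrank (f x) _ hj) (by omega)
        exact hker (hu (f x))
      have : (φ (f x0)) (u (f x)) = if f x0 = f x then 1 else 0 := by
        have := hφ (f x0) (f x)
        calc (φ (f x0)) (u (f x))
            = (φ (f x0)) (b (f x)) + (φ (f x0)) (u (f x) - b (f x)) := by
              rw [← map_add]; congr 1; abel
          _ = if f x0 = f x then 1 else 0 := by rw [htail, this, add_zero]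
      rw [this]
      by_cases hxx : x = x0
      · subst hxx; simp
      · rw [if_neg, if_neg hxx, smul_zero]
        intro hfx
        exact hxx (hf hxt hx0t hfx.symm)
  have : (0 : A) = a x0 := by
    calc (0:A) = (φ (f x0)) 0 := by rw [map_zero]
      _ = (φ (f x0)) (∑ x ∈ t, a x • u (f x)) := by rw [h]
      _ = ∑ x ∈ t, a x • (φ (f x0)) (u (f x)) := by rw [map_sum]; simp
      _ = ∑ x ∈ t, if x = x0 then a x else 0 := Finset.sum_congr rfl key
      _ = a x0 := by rw [Finset.sum_ite_eq' t x0 a, if_pos hx0t]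
  exact hx0a this.symm

theorem gen_span
    (hrank : ∀ i, ∀ j ∈ Ssub i, rank j < rank i)
    (hD : ∀ i, ∀ j ∈ Ssub i, D j = D i)
    (hu : ∀ i, u i - b i ∈ Submodule.span A (b '' Ssub i)) :
    ∀ i, b i ∈ Submodule.span A (u '' {j | D j = D i}) := by
  suffices H : ∀ r : ℕ, ∀ i, rank i < r → b i ∈ Submodule.span A (u '' {j | D j = D i}) by
    exact fun i => H (rank i + 1) i (by omega)
  intro r
  induction r with
  | zero => intro i hi; omega
  | succ r ih =>
    intro i hi
    have hsub : Submodule.span A (b '' Ssub i) ≤ Submodule.span A (u '' {j | D j = D i}) := by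
      rw [Submodule.span_le]
      rintro v ⟨j, hj, rfl⟩
      have hj' : b j ∈ Submodule.span A (u '' {k | D k = D j}) :=
        ih j (by have := hrank i j hj; omega)
      rwa [hD i j hj] at hj'
    have h1 : u i ∈ Submodule.span A (u '' {j | D j = D i}) :=
      Submodule.subset_span ⟨i, rfl, rfl⟩
    have : b i = u i - (u i - b i) := by abel
    rw [this]
    exact Submodule.sub_mem _ h1 (hsub (hu i))

end Generic
section IdealInst

open MvPolynomial

variable {n : ℕ} {A : Type*} [CommRing A]

theorem exp_add_left_cancel {a b c : Exp n} (h : a + b = a + c) : b = c := by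
  ext j
  have := DFunLike.congr_fun h j
  simp only [Finsupp.add_apply] at this
  omega

theorem mem_T_of_memP {T : Set (Exp n)} {P : Finset (Exp n)} (hP : IsPommaretBasis P T)
    {α : Exp n} (hα : α ∈ P) : α ∈ T :=
  (hP.1 α).mpr ⟨α, hα, 0, fun i hi => by simp at hi, by simp⟩

theorem exists_decomp {T : Set (Exp n)} {P : Finset (Exp n)} (hP : IsPommaretBasis P T)
    {γ : Exp n} (hγ : γ ∈ T) :
    ∃ p : Exp n × Exp n, p.1 ∈ P ∧ multExp p.1 p.2 ∧ γ = p.1 + p.2 := by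
  obtain ⟨α, hα, δ, hδ, h⟩ := (hP.1 γ).mp hγ
  exact ⟨(α, δ), hα, hδ, h⟩

open Classical in
noncomputable def decompP (T : Set (Exp n)) (P : Finset (Exp n)) (hP : IsPommaretBasis P T)
    (γ : Exp n) : Exp n × Exp n :=
  if h : γ ∈ T then (exists_decomp hP h).choose else (0, 0)

theorem decompP_spec {T : Set (Exp n)} {P : Finset (Exp n)} (hP : IsPommaretBasis P T)
    {γ : Exp n} (hγ : γ ∈ T) :
    (decompP T P hP γ).1 ∈ P ∧ multExp (decompP T P hP γ).1 (decompP T P hP γ).2 ∧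
      γ = (decompP T P hP γ).1 + (decompP T P hP γ).2 := by
  rw [decompP, dif_pos hγ]
  exact (exists_decomp hP hγ).choose_spec

theorem decompP_unique {T : Set (Exp n)} {P : Finset (Exp n)} (hP : IsPommaretBasis P T)
    {α δ : Exp n} (hα : α ∈ P) (hm : multExp α δ) :
    decompP T P hP (α + δ) = (α, δ) := by
  have hγ : α + δ ∈ T := (hP.1 _).mpr ⟨α, hα, δ, hm, rfl⟩
  obtain ⟨h1, h2, h3⟩ := decompP_spec hP hγ
  have hae : (decompP T P hP (α + δ)).1 = α :=
    hP.2 (α + δ) _ h1 α hα ⟨_, h2, h3⟩ ⟨δ, hm, rfl⟩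
  have hde : (decompP T P hP (α + δ)).2 = δ := by
    rw [hae] at h3
    exact (exp_add_left_cancel h3).symm
  rw [Prod.ext_iff]
  exact ⟨hae, hde⟩

theorem lemD_gen {T' : Set (Exp n)} (hT' : IsMonomialIdeal T') {β δ α' δ' : Exp n}
    (hβ : β ∉ T') (hα' : α' ∈ T') (hm : multExp α' δ') (heq : δ + β = α' + δ') :
    δ' = δ ∨ lexLt δ' δ := by
  rcases lexLt_trichotomy δ' δ with h | h | h
  · exact Or.inr h
  · exact Or.inl h
  exfalso
  obtain ⟨i, hi, habove⟩ := h
  have hpt : ∀ j, δ j + β j = α' j + δ' j := by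
    intro j
    have := DFunLike.congr_fun heq j
    simpa [Finsupp.add_apply] using this
  have hα'le : ∀ j, α' j ≤ β j := by
    intro j
    rcases lt_trichotomy j i with hj | hj | hj
    · have hii : i ∈ δ'.support := Finsupp.mem_support_iff.mpr (by omega)
      have hmi := hm i hii
      by_contra hle
      push_neg at hle
      have hjs : j ∈ α'.support := Finsupp.mem_support_iff.mpr (by omega)
      exact absurd (hmi j hjs) (not_le.mpr hj)
    · subst hj
      have := hpt j
      omega
    · have h1 := hpt j
      have h2 := habove j hj
      omega
  have hissum : β = α' + (β - α') := by
    ext j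
    have := hα'le j
    simp only [Finsupp.add_apply, Finsupp.tsub_apply]
    omega
  exact hβ (hissum ▸ hT' α' hα' (β - α'))

variable (T : Set (Exp n)) (P : Finset (Exp n))

open Classical in
/-- the triangular family on the polynomial ring -/
noncomputable def uI (hP : IsPommaretBasis P T) (g : Exp n → MvPolynomial (Fin (n+1)) A)
    (γ : Exp n) : MvPolynomial (Fin (n+1)) A :=
  if γ ∈ T then monomial (decompP T P hP γ).2 1 * g (decompP T P hP γ).1 else monomial γ 1

open Classical in
noncomputable def rankI (hP : IsPommaretBasis P T) (γ : Exp n) : ℕ :=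
  if γ ∈ T then muB (degE γ + 1) (decompP T P hP γ).2 + 1 else 0

def SsubI (hP : IsPommaretBasis P T) (γ : Exp n) : Set (Exp n) :=
  {γ' | rankI T P hP γ' < rankI T P hP γ ∧ degE γ' = degE γ}

variable {T P}

theorem uI_mul {g : Exp n → MvPolynomial (Fin (n+1)) A} (hP : IsPommaretBasis P T)
    {α δ : Exp n} (hα : α ∈ P) (hm : multExp α δ) :
    uI T P hP g (α + δ) = monomial δ 1 * g α := by
  have hγ : α + δ ∈ T := (hP.1 _).mpr ⟨α, hα, δ, hm, rfl⟩
  rw [uI, if_pos hγ, decompP_unique hP hα hm]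

theorem uI_sub_mem (hT : IsMonomialIdeal T) (hP : IsPommaretBasis P T)
    {g : Exp n → MvPolynomial (Fin (n+1)) A} (hMS : IsMarkedSetI T P g) (γ : Exp n) :
    uI T P hP g γ - monomial γ (1:A) ∈
      Submodule.span A ((fun γ' => monomial γ' (1:A)) '' SsubI T P hP γ) := by
  classical
  by_cases hγ : γ ∈ T
  · obtain ⟨hα, hm, heq⟩ := decompP_spec hP hγ
    set α := (decompP T P hP γ).1 with hα'
    set δ := (decompP T P hP γ).2 with hδ'
    have hmono : (monomial γ (1:A)) = monomial δ 1 * monomial α 1 := by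
      have hcomm : δ + α = γ := by rw [heq]; exact add_comm _ _
      rw [monomial_mul, one_mul, hcomm]
    rw [uI, if_pos hγ, ← hα', ← hδ', hmono, ← mul_sub]
    set t := g α - monomial α (1:A) with ht
    have hexp : monomial δ (1:A) * t = ∑ β ∈ t.support, (coeff β t) • monomial (δ + β) (1:A) := by
      conv_lhs => rw [as_sum t]
      rw [Finset.mul_sum]
      apply Finset.sum_congr rfl
      intro β hβ
      rw [monomial_mul, one_mul, smul_monomial, smul_eq_mul, mul_one]
    rw [hexp]
    apply Submodule.sum_mem
    intro β hβ
    apply Submodule.smul_mem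
    apply Submodule.subset_span
    obtain ⟨hβT, hβdeg⟩ := hMS α hα β hβ
    have hdegs : degE (δ + β) = degE γ := by
      rw [degE_add, hβdeg, heq, degE_add]
      omega
    refine ⟨δ + β, ⟨?_, hdegs⟩, rfl⟩
    -- rank decreases
    have hrγ : rankI T P hP γ = muB (degE γ + 1) δ + 1 := by
      rw [rankI, if_pos hγ]
    by_cases hδβ : δ + β ∈ T
    · obtain ⟨hα2, hm2, heq2⟩ := decompP_spec hP hδβ
      set α'' := (decompP T P hP (δ + β)).1 with hα2'
      set δ'' := (decompP T P hP (δ + β)).2 with hδ2'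
      have hD := lemD_gen hT hβT (mem_T_of_memP hP hα2) hm2 heq2
      have hlex : lexLt δ'' δ := by
        rcases hD with h | h
        · exfalso
          apply hβT
          have : β = α'' := by
            apply exp_add_left_cancel (a := δ)
            rw [heq2, h]
            exact add_comm _ _
          rw [this]
          exact mem_T_of_memP hP hα2
        · exact h
      have hbound : ∀ j, δ'' j < degE γ + 1 := by
        intro j
        have h1 : δ'' j ≤ degE δ'' := apply_le_degE _ _
        have h2 : degE δ'' ≤ degE (δ + β) := by
          rw [heq2, degE_add]
          omega
        omega
      have : rankI T P hP (δ + β) = muB (degE (δ + β) + 1) δ'' + 1 := by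
        rw [rankI, if_pos hδβ]
      rw [this, hrγ, hdegs]
      have := muB_lt (degE γ + 1) hbound hlex
      omega
    · rw [rankI, if_neg hδβ, hrγ]
      omega
  · rw [uI, if_neg hγ, sub_self]
    exact Submodule.zero_mem _

theorem I_indep (hT : IsMonomialIdeal T) (hP : IsPommaretBasis P T)
    {g : Exp n → MvPolynomial (Fin (n+1)) A} (hMS : IsMarkedSetI T P g)
    {σ : Type*} (t : Finset σ) (f : σ → Exp n) (hf : Set.InjOn f t)
    (a : σ → A) (h : ∑ x ∈ t, a x • uI T P hP g (f x) = 0) : ∀ x ∈ t, a x = 0 := by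
  classical
  refine gen_indep (b := fun γ => monomial γ (1:A)) (rank := rankI T P hP)
    (Ssub := SsubI T P hP) (φ := fun γ => lcoeff A γ) ?_ ?_ ?_ t f hf a h
  · intro i j
    simp [lcoeff_apply, coeff_monomial, eq_comm]
  · exact fun i j hj => hj.1
  · exact fun i => uI_sub_mem hT hP hMS i

theorem I_span (hT : IsMonomialIdeal T) (hP : IsPommaretBasis P T)
    {g : Exp n → MvPolynomial (Fin (n+1)) A} (hMS : IsMarkedSetI T P g) (γ : Exp n) :
    (monomial γ (1:A)) ∈
      Submodule.span A (uI T P hP g '' {γ' | degE γ' = degE γ}) := by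
  refine gen_span (b := fun γ => monomial γ (1:A)) (rank := rankI T P hP)
    (Ssub := SsubI T P hP) (D := fun γ => degE γ) ?_ ?_ ?_ γ
  · exact fun i j hj => hj.1
  · exact fun i j hj => hj.2
  · exact fun i => uI_sub_mem hT hP hMS i

end IdealInst
section LemU

open MvPolynomial

variable {n : ℕ} {A : Type*} [CommRing A]
variable {T : Set (Exp n)} {P : Finset (Exp n)} {g : Exp n → MvPolynomial (Fin (n+1)) A}

open Classical in
/-- the part of `p` supported on exponents satisfying `pr` -/
noncomputable def filterPoly (pr : Exp n → Prop) (p : MvPolynomial (Fin (n+1)) A) :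
    MvPolynomial (Fin (n+1)) A :=
  ∑ β ∈ p.support.filter pr, monomial β (coeff β p)

open Classical in
theorem coeff_filterPoly (pr : Exp n → Prop) (p : MvPolynomial (Fin (n+1)) A) (β : Exp n) :
    coeff β (filterPoly pr p) = if pr β then coeff β p else 0 := by
  classical
  rw [filterPoly, coeff_sum]
  rw [Finset.sum_congr rfl (fun β' _ => coeff_monomial β β' _)]
  rw [Finset.sum_ite_eq' _ _ (fun β' => coeff β' p)]
  by_cases h1 : pr β <;> by_cases h2 : β ∈ p.support
  · rw [if_pos (Finset.mem_filter.mpr ⟨h2, h1⟩), if_pos h1]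
  · rw [if_neg (fun hc => h2 (Finset.mem_of_mem_filter _ hc)), if_pos h1,
      notMem_support_iff.mp h2]
  · rw [if_neg (fun hc => h1 (Finset.mem_filter.mp hc).2), if_neg h1]
  · rw [if_neg (fun hc => h1 (Finset.mem_filter.mp hc).2), if_neg h1]

theorem filterPoly_compl (pr : Exp n → Prop) (p : MvPolynomial (Fin (n+1)) A) :
    filterPoly pr p + filterPoly (fun β => ¬ pr β) p = p := by
  classical
  rw [filterPoly, filterPoly]
  rw [Finset.sum_filter_add_sum_filter_not]
  exact (as_sum p).symm

theorem support_filterPoly {pr : Exp n → Prop} {p : MvPolynomial (Fin (n+1)) A} {β : Exp n}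
    (hβ : β ∈ (filterPoly pr p).support) : pr β ∧ β ∈ p.support := by
  have h := mem_support_iff.mp hβ
  rw [coeff_filterPoly] at h
  by_cases h1 : pr β
  · rw [if_pos h1] at h
    exact ⟨h1, mem_support_iff.mpr h⟩
  · rw [if_neg h1] at h
    exact absurd rfl h

theorem mul_g_as_sum (hP : IsPommaretBasis P T) {Q : MvPolynomial (Fin (n+1)) A} {α : Exp n}
    (hα : α ∈ P) (hm : multPoly α Q) :
    Q * g α = ∑ δ ∈ Q.support, (coeff δ Q) • uI T P hP g (α + δ) := by
  conv_lhs => rw [as_sum Q]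
  rw [Finset.sum_mul]
  apply Finset.sum_congr rfl
  intro δ hδ
  rw [uI_mul hP hα (hm δ hδ)]
  rw [show (monomial δ (coeff δ Q)) = (coeff δ Q) • monomial δ (1:A) by
    rw [smul_monomial, smul_eq_mul, mul_one]]
  rw [smul_mul_assoc]

theorem lemU (hT : IsMonomialIdeal T) (hP : IsPommaretBasis P T) (hMS : IsMarkedSetI T P g)
    (Q : ↥P → MvPolynomial (Fin (n+1)) A)
    (hmult : ∀ l : ↥P, multPoly (l : Exp n) (Q l))
    (h : ∑ l : ↥P, Q l * g (l : Exp n) = 0) : ∀ l, Q l = 0 := by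
  classical
  rw [Finset.sum_congr rfl (fun l (_ : l ∈ Finset.univ) => mul_g_as_sum hP l.2 (hmult l))] at h
  rw [Finset.sum_sigma'] at h
  have hinj : Set.InjOn (fun x : Σ _ : ↥P, Exp n => (x.1 : Exp n) + x.2)
      ↑(Finset.univ.sigma fun l : ↥P => (Q l).support) := by
    rintro ⟨l1, δ1⟩ hx ⟨l2, δ2⟩ hy hfe
    simp only [Finset.coe_sigma, Set.mem_sigma_iff, Finset.mem_coe] at hx hy
    have e1 := decompP_unique hP l1.2 (hmult l1 δ1 hx.2)
    have e2 := decompP_unique hP l2.2 (hmult l2 δ2 hy.2)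
    simp only at hfe
    rw [hfe, e2] at e1
    simp only [Prod.mk.injEq] at e1
    obtain ⟨h1, h2⟩ := e1
    have hl : l1 = l2 := Subtype.ext h1.symm
    subst hl
    subst h2
    rfl
  have hz := I_indep hT hP hMS (Finset.univ.sigma fun l : ↥P => (Q l).support)
    (fun x => (x.1 : Exp n) + x.2) hinj (fun x => coeff x.2 (Q x.1)) h
  intro l
  refine MvPolynomial.ext _ _ fun δ => ?_
  rw [coeff_zero]
  by_cases hδ : δ ∈ (Q l).support
  · exact hz ⟨l, δ⟩ (Finset.mem_sigma.mpr ⟨Finset.mem_univ _, hδ⟩)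
  · exact notMem_support_iff.mp hδ

theorem g_homog (hMS : IsMarkedSetI T P g) {α : Exp n} (hα : α ∈ P) :
    (g α).IsHomogeneous (degE α) := by
  classical
  rw [← mem_homogeneousSubmodule]
  nth_rewrite 1 [as_sum (g α)]
  apply Submodule.sum_mem
  intro β hβ
  rw [mem_homogeneousSubmodule]
  apply isHomogeneous_monomial
  show degE β = degE α
  by_cases hβα : β = α
  · rw [hβα]
  · have hco : coeff β (g α - monomial α (1:A)) ≠ 0 := by
      rw [coeff_sub, coeff_monomial, if_neg (fun hc => hβα hc.symm), sub_zero]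
      exact mem_support_iff.mp hβ
    exact (hMS α hα β (mem_support_iff.mpr hco)).2

theorem pc_homog (hT : IsMonomialIdeal T) (hP : IsPommaretBasis P T)
    (hMS : IsMarkedSetI T P g)
    {Pck : ↥P → MvPolynomial (Fin (n+1)) A} {k : ↥P} {i : Fin (n+1)}
    (hrep : X i * g (k : Exp n) = ∑ l : ↥P, Pck l * g (l : Exp n))
    (hmult : ∀ l : ↥P, multPoly (l : Exp n) (Pck l)) :
    ∀ l : ↥P, ∀ β ∈ (Pck l).support, degE β + degE (l : Exp n) = 1 + degE (k : Exp n) := by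
  classical
  set m0 := 1 + degE (k : Exp n) with hm0
  have hmQ : ∀ l : ↥P, multPoly (l : Exp n)
      (filterPoly (fun β => degE β + degE (l : Exp n) ≠ m0) (Pck l)) :=
    fun l β hβ => hmult l β (support_filterPoly hβ).2
  have hq0 : ∑ l : ↥P,
      (filterPoly (fun β => degE β + degE (l : Exp n) ≠ m0) (Pck l)) * g (l : Exp n) = 0 := by
    have hsum : ∑ l : ↥P,
        (filterPoly (fun β => degE β + degE (l : Exp n) ≠ m0) (Pck l)) * g (l : Exp n)
        = X i * g (k : Exp n)
          - ∑ l : ↥P, (filterPoly (fun β => ¬ degE β + degE (l : Exp n) ≠ m0) (Pck l))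
              * g (l : Exp n) := by
      rw [hrep, ← Finset.sum_sub_distrib]
      apply Finset.sum_congr rfl
      intro l _
      have hc := filterPoly_compl (fun β => degE β + degE (l : Exp n) ≠ m0) (Pck l)
      linear_combination g (l : Exp n) * hc
    have hhom : ∑ l : ↥P,
        (filterPoly (fun β => degE β + degE (l : Exp n) ≠ m0) (Pck l)) * g (l : Exp n)
        ∈ homogeneousSubmodule (Fin (n+1)) A m0 := by
      rw [hsum]
      apply Submodule.sub_mem
      · rw [mem_homogeneousSubmodule, hm0]
        exact (isHomogeneous_X A i).mul (g_homog hMS k.2)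
      · apply Submodule.sum_mem
        intro l _
        nth_rewrite 1 [as_sum (filterPoly (fun β => ¬ degE β + degE (l : Exp n) ≠ m0) (Pck l))]
        rw [Finset.sum_mul]
        apply Submodule.sum_mem
        intro β hβ
        rw [mem_homogeneousSubmodule]
        have hdeg : degE β + degE (l : Exp n) = m0 := not_ne_iff.mp (support_filterPoly hβ).1
        have hh := (isHomogeneous_monomial
          (coeff β (filterPoly (fun β => ¬ degE β + degE (l : Exp n) ≠ m0) (Pck l)))
          (rfl : Finsupp.degree β = degE β)).mul (g_homog hMS l.2)
        exact hdeg ▸ hh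
    refine MvPolynomial.ext _ _ fun γ => ?_
    rw [coeff_zero]
    by_cases hγ : Finsupp.degree γ = m0
    · rw [Finset.sum_congr rfl (fun l (_ : l ∈ Finset.univ) => mul_g_as_sum hP l.2 (hmQ l)),
        coeff_sum]
      apply Finset.sum_eq_zero
      intro l _
      rw [coeff_sum]
      apply Finset.sum_eq_zero
      intro δ hδ
      rw [coeff_smul]
      have hne := (support_filterPoly hδ).1
      have huh : (uI T P hP g ((l : Exp n) + δ)).IsHomogeneous (degE δ + degE (l : Exp n)) := by
        rw [uI_mul hP l.2 (hmQ l δ hδ)]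
        exact (isHomogeneous_monomial (1:A) (rfl : Finsupp.degree δ = degE δ)).mul
          (g_homog hMS l.2)
      rw [huh.coeff_eq_zero (by rw [hγ]; omega), smul_zero]
    · exact ((mem_homogeneousSubmodule _ _).mp hhom).coeff_eq_zero hγ
  have hQz := lemU hT hP hMS _ hmQ hq0
  intro l β hβ
  by_contra hne
  have hco := coeff_filterPoly (fun β => degE β + degE (l : Exp n) ≠ m0) (Pck l) β
  rw [if_pos hne, hQz l, coeff_zero] at hco
  exact mem_support_iff.mp hβ hco.symm

end LemU
section ModInst

open MvPolynomial

variable {n : ℕ} {A : Type*} [CommRing A]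
variable {T : Set (Exp n)} {P : Finset (Exp n)} {g : Exp n → MvPolynomial (Fin (n+1)) A}

theorem monomial_mul_expand (δ : Exp n) (t : MvPolynomial (Fin (n+1)) A) :
    monomial δ (1:A) * t = ∑ β ∈ t.support, (coeff β t) • monomial (δ + β) (1:A) := by
  conv_lhs => rw [as_sum t]
  rw [Finset.mul_sum]
  apply Finset.sum_congr rfl
  intro β hβ
  rw [monomial_mul, one_mul, smul_monomial, smul_eq_mul, mul_one]

theorem support_monomial_mul' {δ β : Exp n} {t : MvPolynomial (Fin (n+1)) A}
    (hβ : β ∈ (monomial δ (1:A) * t).support) : ∃ β' ∈ t.support, β = δ + β' := by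
  classical
  rw [monomial_mul_expand] at hβ
  obtain ⟨β', hβ', hmem⟩ := Finset.mem_biUnion.mp (MvPolynomial.support_sum hβ)
  refine ⟨β', hβ', ?_⟩
  have h1 : β ∈ (monomial (δ + β') (1:A)).support := MvPolynomial.support_smul hmem
  have h2 := MvPolynomial.support_monomial (s := δ + β') (a := (1:A))
  rw [h2] at h1
  split_ifs at h1 with h
  · simp at h1
  · exact (Finset.mem_singleton.mp h1)

open Classical in
noncomputable def maxv (η : Exp n) : Fin (n+1) :=
  if h : η.support.Nonempty then η.support.max' h else 0

theorem maxv_mem {η : Exp n} (h : η.support.Nonempty) : maxv η ∈ η.support := by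
  rw [maxv, dif_pos h]; exact Finset.max'_mem _ _

theorem le_maxv {η : Exp n} (h : η.support.Nonempty) {j : Fin (n+1)} (hj : j ∈ η.support) :
    j ≤ maxv η := by
  rw [maxv, dif_pos h]; exact Finset.le_max' _ _ hj

theorem jsyz_monomialIdeal (l : ↥P) : IsMonomialIdeal (Jsyz P l) := by
  rintro α ⟨j, hj, hnm⟩ β
  refine ⟨j, Finsupp.mem_support_iff.mpr ?_, hnm⟩
  have := Finsupp.mem_support_iff.mp hj
  simp only [Finsupp.add_apply]
  omega

theorem jsyz_nonempty {l : ↥P} {η : Exp n} (hη : η ∈ Jsyz P l) : η.support.Nonempty := by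
  obtain ⟨j, hj, _⟩ := hη
  exact ⟨j, hj⟩

theorem maxv_nonmult {l : ↥P} {η : Exp n} (hη : η ∈ Jsyz P l) : ¬ mult (l : Exp n) (maxv η) := by
  obtain ⟨j, hj, hnm⟩ := hη
  intro hm
  apply hnm
  intro k hk
  exact le_trans (le_maxv ⟨j, hj⟩ hj) (hm k hk)

theorem single_mem_jsyz {l : ↥P} {i : Fin (n+1)} (hnm : ¬ mult (l : Exp n) i) :
    Finsupp.single i 1 ∈ Jsyz P l :=
  ⟨i, by rw [Finsupp.support_single_ne_zero i (by omega)]; exact Finset.mem_singleton_self i, hnm⟩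

theorem not_mem_jsyz_of_multExp {l : ↥P} {β : Exp n} (h : multExp (l : Exp n) β) :
    β ∉ Jsyz P l := by
  rintro ⟨j, hj, hn⟩
  exact hn (h j hj)

theorem single_add_sub {η : Exp n} (h : η.support.Nonempty) :
    Finsupp.single (maxv η) 1 + (η - Finsupp.single (maxv η) 1) = η := by
  have h1 : 1 ≤ η (maxv η) := Nat.one_le_iff_ne_zero.mpr (Finsupp.mem_support_iff.mp (maxv_mem h))
  ext j
  simp only [Finsupp.add_apply, Finsupp.tsub_apply, Finsupp.single_apply]
  split_ifs with h
  · rw [← h]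
    omega
  · omega

theorem support_sub_subset (η ζ : Exp n) : (η - ζ).support ⊆ η.support := by
  intro j hj
  have := Finsupp.mem_support_iff.mp hj
  rw [Finsupp.tsub_apply] at this
  exact Finsupp.mem_support_iff.mpr (by omega)

theorem multExp_single_of {ζ : Exp n} {i : Fin (n+1)} (h : ∀ j ∈ ζ.support, j ≤ i) :
    multExp (Finsupp.single i (1:ℕ)) ζ := by
  intro j hj k hk
  rw [Finsupp.support_single_ne_zero i (by omega)] at hk
  rw [Finset.mem_singleton.mp hk]
  exact h j hj

open Classical in
/-- the triangular family on the free module -/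
noncomputable def uV (P : Finset (Exp n)) (Pc : ↥P → Fin (n+1) → ↥P → MvPolynomial (Fin (n+1)) A)
    (x : ↥P × Exp n) : ↥P → MvPolynomial (Fin (n+1)) A :=
  if x.2 ∈ Jsyz P x.1 then
    (monomial (x.2 - Finsupp.single (maxv x.2) 1) (1:A)) • Ssyz P Pc x.1 (maxv x.2)
  else termV A x.2 x.1

open Classical in
noncomputable def rankV (P : Finset (Exp n)) (x : ↥P × Exp n) : ℕ :=
  if x.2 ∈ Jsyz P x.1 then
    muB (degE x.2 + degE (x.1 : Exp n) + 1) (x.2 - Finsupp.single (maxv x.2) 1) + 1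
  else 0

def mdeg (P : Finset (Exp n)) (x : ↥P × Exp n) : ℤ := (degE x.2 : ℤ) + ddeg P x.1

def SsubV (P : Finset (Exp n)) (x : ↥P × Exp n) : Set (↥P × Exp n) :=
  {y | rankV P y < rankV P x ∧ mdeg P y = mdeg P x}

theorem uV_smul {Pc : ↥P → Fin (n+1) → ↥P → MvPolynomial (Fin (n+1)) A} {l : ↥P}
    {i : Fin (n+1)} (hnm : ¬ mult (l : Exp n) i) {δ : Exp n} (hδ : ∀ j ∈ δ.support, j ≤ i) :
    uV P Pc (l, δ + Finsupp.single i 1) = (monomial δ (1:A)) • Ssyz P Pc l i := by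
  have hi : i ∈ (δ + Finsupp.single i 1).support := by
    rw [Finsupp.mem_support_iff, Finsupp.add_apply, Finsupp.single_apply, if_pos rfl]
    omega
  have hJ : δ + Finsupp.single i 1 ∈ Jsyz P l := ⟨i, hi, hnm⟩
  have hmax : maxv (δ + Finsupp.single i 1) = i := by
    apply le_antisymm
    · have hm := maxv_mem ⟨i, hi⟩
      have := Finsupp.support_add hm
      rcases Finset.mem_union.mp this with h | h
      · exact hδ _ h
      · rw [Finsupp.support_single_ne_zero i (by omega)] at h
        rw [Finset.mem_singleton.mp h]
    · exact le_maxv ⟨i, hi⟩ hi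
  have hsub : (δ + Finsupp.single i 1) - Finsupp.single i 1 = δ := by
    ext j
    simp only [Finsupp.tsub_apply, Finsupp.add_apply]
    omega
  rw [uV, if_pos hJ]
  simp only [hmax, hsub]

theorem mem_span_termV {Sset : Set (↥P × Exp n)} {v : ↥P → MvPolynomial (Fin (n+1)) A}
    (h : ∀ l' : ↥P, ∀ β ∈ (v l').support, ((l', β) : ↥P × Exp n) ∈ Sset) :
    v ∈ Submodule.span A ((fun x : ↥P × Exp n => termV A x.2 x.1) '' Sset) := by
  classical
  have hv : v = ∑ l' : ↥P, Pi.single l' (v l') := (Finset.univ_sum_single v).symm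
  rw [hv]
  apply Submodule.sum_mem
  intro l' _
  have h2 : Pi.single l' (v l') = ∑ β ∈ (v l').support, (coeff β (v l')) • termV A β l' := by
    have hlin : Pi.single l' (v l')
        = (LinearMap.single A (fun _ : ↥P => MvPolynomial (Fin (n+1)) A) l') (v l') := rfl
    rw [hlin]
    nth_rewrite 1 [as_sum (v l')]
    rw [map_sum]
    apply Finset.sum_congr rfl
    intro β hβ
    rw [show (monomial β (coeff β (v l'))) = (coeff β (v l')) • monomial β (1:A) by
      rw [smul_monomial, smul_eq_mul, mul_one]]
    rw [map_smul]
    rfl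
  rw [h2]
  apply Submodule.sum_mem
  intro β hβ
  apply Submodule.smul_mem
  exact Submodule.subset_span ⟨(l', β), h l' β hβ, rfl⟩

theorem ssyz_apply (Pc : ↥P → Fin (n+1) → ↥P → MvPolynomial (Fin (n+1)) A)
    (l : ↥P) (i : Fin (n+1)) (δ : Exp n) (l' : ↥P) :
    (((monomial δ (1:A)) • Ssyz P Pc l i - termV A (δ + Finsupp.single i 1) l :
        ↥P → MvPolynomial (Fin (n+1)) A)) l'
      = -(monomial δ 1 * Pc l i l') := by
  classical
  simp only [Pi.sub_apply, Pi.smul_apply, Ssyz, termV, Pi.single_apply, smul_eq_mul]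
  by_cases hl : l' = l
  · rw [if_pos hl, if_pos hl, mul_sub]
    have : monomial δ (1:A) * X i = monomial (δ + Finsupp.single i 1) (1:A) := by
      rw [X, monomial_mul, one_mul]
    rw [this]
    ring
  · rw [if_neg hl, if_neg hl, mul_sub, mul_zero]
    ring

theorem uV_sub_mem (hT : IsMonomialIdeal T) (hP : IsPommaretBasis P T)
    (hMS : IsMarkedSetI T P g)
    (Pc : ↥P → Fin (n+1) → ↥P → MvPolynomial (Fin (n+1)) A)
    (hPc : ∀ (k : ↥P) (i : Fin (n+1)), ¬ mult (k : Exp n) i →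
      (X i * g (k : Exp n) = ∑ l : ↥P, Pc k i l * g (l : Exp n)) ∧
      ∀ l : ↥P, multPoly (l : Exp n) (Pc k i l))
    (x : ↥P × Exp n) :
    uV P Pc x - termV A x.2 x.1 ∈
      Submodule.span A ((fun y : ↥P × Exp n => termV A y.2 y.1) '' SsubV P x) := by
  classical
  obtain ⟨l, η⟩ := x
  by_cases hx : η ∈ Jsyz P l
  case neg =>
    rw [uV, if_neg hx, sub_self]
    exact Submodule.zero_mem _
  case pos =>
  set i := maxv η with hi
  set δ := η - Finsupp.single i 1 with hδdef
  have hne : η.support.Nonempty := jsyz_nonempty hx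
  have hnm : ¬ mult (l : Exp n) i := maxv_nonmult hx
  have hdecomp : δ + Finsupp.single i 1 = η := by
    rw [hδdef, hi]
    rw [add_comm]
    exact single_add_sub hne
  have hPcl := hPc l i hnm
  have hdegs := pc_homog hT hP hMS hPcl.1 hPcl.2
  have hdegη : degE η = degE δ + 1 := by
    rw [← hdecomp, degE_add, degE_single]
  have hcomp : ∀ l', (uV P Pc (l, η) - termV A η l) l' = -(monomial δ 1 * Pc l i l') := by
    intro l'
    rw [uV, if_pos hx]
    simp only
    rw [← hi, ← hδdef]
    have := ssyz_apply Pc l i δ l'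
    rw [hdecomp] at this
    exact this
  apply mem_span_termV
  intro l' β hβ
  rw [hcomp l', support_neg] at hβ
  obtain ⟨β', hβ', hββ'⟩ := support_monomial_mul' hβ
  subst hββ'
  have hdegβ' : degE β' + degE (l' : Exp n) = 1 + degE (l : Exp n) := hdegs l' β' hβ'
  have hmdeg : mdeg P (l', δ + β') = mdeg P (l, η) := by
    simp only [mdeg, ddeg, degE_add]
    push_cast
    omega
  refine ⟨?_, hmdeg⟩
  -- rank decreases
  have hrx : rankV P (l, η) = muB (degE η + degE (l : Exp n) + 1) δ + 1 := by
    rw [rankV, if_pos hx]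
  by_cases hJ' : δ + β' ∈ Jsyz P l'
  · have hne' : (δ + β').support.Nonempty := jsyz_nonempty hJ'
    set i'' := maxv (δ + β') with hi''
    set δ'' := (δ + β') - Finsupp.single i'' 1 with hδ''
    have hdec'' : Finsupp.single i'' 1 + δ'' = δ + β' := single_add_sub hne'
    have hβ'notJ : β' ∉ Jsyz P l' := not_mem_jsyz_of_multExp (hPcl.2 l' β' hβ')
    have hsingJ : Finsupp.single i'' 1 ∈ Jsyz P l' := single_mem_jsyz (maxv_nonmult hJ')
    have hmE : multExp (Finsupp.single i'' (1:ℕ)) δ'' := by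
      apply multExp_single_of
      intro j hj
      exact le_maxv hne' (support_sub_subset _ _ hj)
    have hD := lemD_gen (jsyz_monomialIdeal l') hβ'notJ hsingJ hmE hdec''.symm
    have hlex : lexLt δ'' δ := by
      rcases hD with h | h
      · exfalso
        apply hβ'notJ
        have : β' = Finsupp.single i'' 1 := by
          apply exp_add_left_cancel (a := δ)
          rw [← hdec'', h]
          exact add_comm _ _
        rw [this]
        exact hsingJ
      · exact h
    have hdegsum : degE (δ + β') + degE (l' : Exp n) = degE η + degE (l : Exp n) := by
      rw [degE_add]
      omega
    have hbound : ∀ j, δ'' j < degE η + degE (l : Exp n) + 1 := by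
      intro j
      have h1 : δ'' j ≤ degE δ'' := apply_le_degE _ _
      have h2 : degE δ'' ≤ degE (δ + β') := by
        rw [← hdec'', degE_add]
        omega
      omega
    have hr' : rankV P (l', δ + β')
        = muB (degE (δ + β') + degE (l' : Exp n) + 1) δ'' + 1 := by
      rw [rankV, if_pos hJ']
    rw [hr', hrx, hdegsum]
    have := muB_lt (degE η + degE (l : Exp n) + 1) hbound hlex
    omega
  · rw [rankV, if_neg hJ', hrx]
    omega

noncomputable def φV (x : ↥P × Exp n) :
    (↥P → MvPolynomial (Fin (n+1)) A) →ₗ[A] A :=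
  (lcoeff A x.2).comp (LinearMap.proj x.1)

theorem φV_termV (x y : ↥P × Exp n) :
    φV x (termV A y.2 y.1) = if x = y then (1:A) else 0 := by
  classical
  obtain ⟨x1, x2⟩ := x
  obtain ⟨y1, y2⟩ := y
  simp only [φV, termV, LinearMap.comp_apply, LinearMap.proj_apply, lcoeff_apply,
    Pi.single_apply, Prod.mk.injEq]
  by_cases h1 : x1 = y1
  · rw [if_pos h1, coeff_monomial]
    by_cases h2 : y2 = x2
    · rw [if_pos h2, if_pos ⟨h1, h2.symm⟩]
    · rw [if_neg h2, if_neg (fun hc => h2 hc.2.symm)]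
  · rw [if_neg h1, coeff_zero, if_neg (fun hc => h1 hc.1)]

theorem V_indep (hT : IsMonomialIdeal T) (hP : IsPommaretBasis P T)
    (hMS : IsMarkedSetI T P g)
    (Pc : ↥P → Fin (n+1) → ↥P → MvPolynomial (Fin (n+1)) A)
    (hPc : ∀ (k : ↥P) (i : Fin (n+1)), ¬ mult (k : Exp n) i →
      (X i * g (k : Exp n) = ∑ l : ↥P, Pc k i l * g (l : Exp n)) ∧
      ∀ l : ↥P, multPoly (l : Exp n) (Pc k i l))
    {σ : Type*} (t : Finset σ) (f : σ → ↥P × Exp n) (hf : Set.InjOn f t)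
    (a : σ → A) (h : ∑ x ∈ t, a x • uV P Pc (f x) = 0) : ∀ x ∈ t, a x = 0 := by
  classical
  refine gen_indep (b := fun x : ↥P × Exp n => termV A x.2 x.1) (rank := rankV P)
    (Ssub := SsubV P) (φ := φV) ?_ ?_ ?_ t f hf a h
  · exact fun x y => φV_termV x y
  · exact fun x y hy => hy.1
  · exact fun x => uV_sub_mem hT hP hMS Pc hPc x

theorem V_span (hT : IsMonomialIdeal T) (hP : IsPommaretBasis P T)
    (hMS : IsMarkedSetI T P g)
    (Pc : ↥P → Fin (n+1) → ↥P → MvPolynomial (Fin (n+1)) A)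
    (hPc : ∀ (k : ↥P) (i : Fin (n+1)), ¬ mult (k : Exp n) i →
      (X i * g (k : Exp n) = ∑ l : ↥P, Pc k i l * g (l : Exp n)) ∧
      ∀ l : ↥P, multPoly (l : Exp n) (Pc k i l))
    (x : ↥P × Exp n) :
    termV A x.2 x.1 ∈ Submodule.span A (uV P Pc '' {y | mdeg P y = mdeg P x}) := by
  refine gen_span (b := fun x : ↥P × Exp n => termV A x.2 x.1) (rank := rankV P)
    (Ssub := SsubV P) (D := mdeg P) ?_ ?_ ?_ x
  · exact fun x y hy => hy.1
  · exact fun x y hy => hy.2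
  · exact fun x => uV_sub_mem hT hP hMS Pc hPc x

end ModInst
section Final

open MvPolynomial

variable {n : ℕ} {A : Type*} [CommRing A]
variable {T : Set (Exp n)} {P : Finset (Exp n)} {g : Exp n → MvPolynomial (Fin (n+1)) A}

open Classical in
/-- the marked set `G_Syz`, defined so that `gs (x_i e_k) = S_{k;i}` -/
noncomputable def gsdef (P : Finset (Exp n))
    (Pc : ↥P → Fin (n+1) → ↥P → MvPolynomial (Fin (n+1)) A) :
    Exp n → ↥P → (↥P → MvPolynomial (Fin (n+1)) A) :=
  fun α k =>
    if h : ∃ i : Fin (n+1), ¬ mult (k : Exp n) i ∧ α = Finsupp.single i 1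
    then Ssyz P Pc k h.choose else 0

theorem gsdef_single (P : Finset (Exp n))
    (Pc : ↥P → Fin (n+1) → ↥P → MvPolynomial (Fin (n+1)) A) {k : ↥P} {i : Fin (n+1)}
    (hnm : ¬ mult (k : Exp n) i) : gsdef P Pc (Finsupp.single i 1) k = Ssyz P Pc k i := by
  have hex : ∃ j : Fin (n+1), ¬ mult (k : Exp n) j ∧
      (Finsupp.single i 1 : Exp n) = Finsupp.single j 1 := ⟨i, hnm, rfl⟩
  rw [gsdef, dif_pos hex]
  have hspec := hex.choose_spec
  have hii : i = hex.choose :=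
    Finsupp.single_left_injective (M := ℕ) one_ne_zero hspec.2
  rw [← hii]

theorem psyz_mem {l : ↥P} {α : Exp n} (hα : α ∈ Psyz P l) :
    ∃ i, ¬ mult (l : Exp n) i ∧ α = Finsupp.single i 1 := by
  classical
  simp only [Psyz, Finset.mem_image, Finset.mem_filter, Finset.mem_univ, true_and] at hα
  obtain ⟨i, hi, rfl⟩ := hα
  exact ⟨i, hi, rfl⟩

theorem single_mem_psyz {l : ↥P} {i : Fin (n+1)} (hnm : ¬ mult (l : Exp n) i) :
    Finsupp.single i 1 ∈ Psyz P l := by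
  classical
  simp only [Psyz, Finset.mem_image, Finset.mem_filter, Finset.mem_univ, true_and]
  exact ⟨i, hnm, rfl⟩

theorem multExp_of_not_jsyz {l : ↥P} {η : Exp n} (hx : η ∉ Jsyz P l) :
    multExp (l : Exp n) η := fun j hj =>
  Classical.byContradiction fun hn => hx ⟨j, hj, hn⟩

theorem syzMap_ssyz (Pc : ↥P → Fin (n+1) → ↥P → MvPolynomial (Fin (n+1)) A)
    {k : ↥P} {i : Fin (n+1)}
    (hrep : X i * g (k : Exp n) = ∑ l : ↥P, Pc k i l * g (l : Exp n)) :
    syzMap P g (Ssyz P Pc k i) = 0 := by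
  classical
  have h0 : syzMap P g (Ssyz P Pc k i)
      = ∑ l : ↥P, ((if l = k then X i else 0) - Pc k i l) * g (l : Exp n) := rfl
  rw [h0]
  have h1 : ∀ l : ↥P, ((if l = k then X i else 0) - Pc k i l) * g (l : Exp n)
      = (if l = k then X i * g (l : Exp n) else 0) - Pc k i l * g (l : Exp n) := by
    intro l
    rw [sub_mul, ite_mul, zero_mul]
  rw [Finset.sum_congr rfl (fun l _ => h1 l), Finset.sum_sub_distrib,
    Finset.sum_ite_eq' Finset.univ k (fun l => X i * g (l : Exp n)),
    if_pos (Finset.mem_univ k), hrep, sub_self]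

theorem syzMap_termV (hP : IsPommaretBasis P T) {l : ↥P} {η : Exp n}
    (hm : multExp (l : Exp n) η) :
    syzMap P g (termV A η l) = uI T P hP g ((l : Exp n) + η) := by
  classical
  have h0 : syzMap P g (termV A η l)
      = ∑ l' : ↥P, (termV A η l l') * g (l' : Exp n) := rfl
  rw [h0]
  have h1 : ∀ l' : ↥P, (termV A η l l') * g (l' : Exp n)
      = if l' = l then monomial η (1:A) * g (l' : Exp n) else 0 := by
    intro l'
    rw [termV, Pi.single_apply, ite_mul, zero_mul]
  rw [Finset.sum_congr rfl (fun l' _ => h1 l'),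
    Finset.sum_ite_eq' Finset.univ l (fun l' => monomial η (1:A) * g (l' : Exp n)),
    if_pos (Finset.mem_univ l), uI_mul hP l.2 hm]

theorem syzMap_uV_T (Pc : ↥P → Fin (n+1) → ↥P → MvPolynomial (Fin (n+1)) A)
    (hPc : ∀ (k : ↥P) (i : Fin (n+1)), ¬ mult (k : Exp n) i →
      (X i * g (k : Exp n) = ∑ l : ↥P, Pc k i l * g (l : Exp n)) ∧
      ∀ l : ↥P, multPoly (l : Exp n) (Pc k i l))
    {x : ↥P × Exp n} (hx : x.2 ∈ Jsyz P x.1) : syzMap P g (uV P Pc x) = 0 := by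
  obtain ⟨l, η⟩ := x
  rw [uV, if_pos hx, LinearMap.map_smul, syzMap_ssyz Pc (hPc l (maxv η) (maxv_nonmult hx)).1,
    smul_zero]

theorem syzMap_uV_N (hP : IsPommaretBasis P T)
    (Pc : ↥P → Fin (n+1) → ↥P → MvPolynomial (Fin (n+1)) A)
    {x : ↥P × Exp n} (hx : x.2 ∉ Jsyz P x.1) :
    syzMap P g (uV P Pc x) = uI T P hP g ((x.1 : Exp n) + x.2) := by
  obtain ⟨l, η⟩ := x
  rw [uV, if_neg hx]
  exact syzMap_termV hP (multExp_of_not_jsyz hx)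

theorem rep_of_mem_span (Pc : ↥P → Fin (n+1) → ↥P → MvPolynomial (Fin (n+1)) A)
    {Sset : Set (↥P × Exp n)} {v : ↥P → MvPolynomial (Fin (n+1)) A}
    (hv : v ∈ Submodule.span A (uV P Pc '' Sset)) :
    ∃ c : (↥P × Exp n) →₀ A, ↑c.support ⊆ Sset ∧
      (∑ x ∈ c.support, c x • uV P Pc x) = v := by
  rw [Finsupp.mem_span_image_iff_linearCombination] at hv
  obtain ⟨c, hc1, hc2⟩ := hv
  refine ⟨c, (Finsupp.mem_supported A c).mp hc1, ?_⟩
  rw [← hc2, Finsupp.linearCombination_apply, Finsupp.sum]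

theorem ker_coeffs (hT : IsMonomialIdeal T) (hP : IsPommaretBasis P T)
    (hMS : IsMarkedSetI T P g)
    (Pc : ↥P → Fin (n+1) → ↥P → MvPolynomial (Fin (n+1)) A)
    (hPc : ∀ (k : ↥P) (i : Fin (n+1)), ¬ mult (k : Exp n) i →
      (X i * g (k : Exp n) = ∑ l : ↥P, Pc k i l * g (l : Exp n)) ∧
      ∀ l : ↥P, multPoly (l : Exp n) (Pc k i l))
    {v : ↥P → MvPolynomial (Fin (n+1)) A} (hv : syzMap P g v = 0)
    (c : (↥P × Exp n) →₀ A) (hc : (∑ x ∈ c.support, c x • uV P Pc x) = v) :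
    ∀ x ∈ c.support, x.2 ∉ Jsyz P x.1 → c x = 0 := by
  classical
  have happ : ∑ x ∈ c.support, c x • syzMap P g (uV P Pc x) = 0 := by
    calc ∑ x ∈ c.support, c x • syzMap P g (uV P Pc x)
        = ∑ x ∈ c.support, syzMap P g (c x • uV P Pc x) := by
          apply Finset.sum_congr rfl
          intro x _
          rw [LinearMap.map_smul_of_tower]
      _ = syzMap P g (∑ x ∈ c.support, c x • uV P Pc x) := (map_sum _ _ _).symm
      _ = 0 := by rw [hc, hv]
  have hsplit : ∑ x ∈ c.support.filter (fun x : ↥P × Exp n => x.2 ∉ Jsyz P x.1),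
      c x • uI T P hP g ((x.1 : Exp n) + x.2) = 0 := by
    calc ∑ x ∈ c.support.filter (fun x : ↥P × Exp n => x.2 ∉ Jsyz P x.1),
        c x • uI T P hP g ((x.1 : Exp n) + x.2)
        = ∑ x ∈ c.support.filter (fun x : ↥P × Exp n => x.2 ∉ Jsyz P x.1),
            c x • syzMap P g (uV P Pc x) := by
          apply Finset.sum_congr rfl
          intro x hx
          rw [syzMap_uV_N hP Pc (Finset.mem_filter.mp hx).2]
      _ = ∑ x ∈ c.support, c x • syzMap P g (uV P Pc x) := by
          apply Finset.sum_subset (Finset.filter_subset _ _)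
          intro x hx hnx
          have hxJ : x.2 ∈ Jsyz P x.1 := by
            by_contra hcon
            exact hnx (Finset.mem_filter.mpr ⟨hx, hcon⟩)
          rw [syzMap_uV_T Pc hPc hxJ, smul_zero]
      _ = 0 := happ
  have hinj : Set.InjOn (fun x : ↥P × Exp n => (x.1 : Exp n) + x.2)
      ↑(c.support.filter (fun x : ↥P × Exp n => x.2 ∉ Jsyz P x.1)) := by
    rintro ⟨l1, δ1⟩ hx ⟨l2, δ2⟩ hy hfe
    simp only [Finset.coe_filter, Set.mem_setOf_eq] at hx hy
    have e1 := decompP_unique hP l1.2 (multExp_of_not_jsyz hx.2)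
    have e2 := decompP_unique hP l2.2 (multExp_of_not_jsyz hy.2)
    simp only at hfe
    rw [hfe, e2] at e1
    simp only [Prod.mk.injEq] at e1
    exact Prod.ext (Subtype.ext e1.1.symm) e1.2.symm
  have hz := I_indep hT hP hMS _ _ hinj _ hsplit
  intro x hx hnotJ
  exact hz x (Finset.mem_filter.mpr ⟨hx, hnotJ⟩)

theorem uV_T_mem_gmod (Pc : ↥P → Fin (n+1) → ↥P → MvPolynomial (Fin (n+1)) A)
    {x : ↥P × Exp n} (hx : x.2 ∈ Jsyz P x.1) :
    uV P Pc x ∈ GmodS (Psyz P) (gsdef P Pc) := by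
  obtain ⟨l, η⟩ := x
  rw [uV, if_pos hx]
  apply Submodule.smul_mem
  apply Submodule.subset_span
  refine ⟨l, Finsupp.single (maxv η) 1, single_mem_psyz (maxv_nonmult hx), ?_⟩
  rw [gsdef_single P Pc (maxv_nonmult hx)]

theorem support_monomial_subset' {α β : Exp n} {c : A}
    (hβ : β ∈ (monomial α c).support) : β = α := by
  classical
  rw [support_monomial] at hβ
  split_ifs at hβ with h
  · simp at hβ
  · exact Finset.mem_singleton.mp hβ

theorem termV_homog {α : Exp n} {k : ↥P} {s : ℤ} (h : (degE α : ℤ) + ddeg P k = s) :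
    IsHomogV (ddeg P) (termV A α k) s := by
  classical
  intro k' β hβ
  rw [termV, Pi.single_apply] at hβ
  split_ifs at hβ with hk
  · rw [support_monomial_subset' hβ, hk]
    exact h
  · simp at hβ

theorem uV_T_homog (hT : IsMonomialIdeal T) (hP : IsPommaretBasis P T)
    (hMS : IsMarkedSetI T P g)
    (Pc : ↥P → Fin (n+1) → ↥P → MvPolynomial (Fin (n+1)) A)
    (hPc : ∀ (k : ↥P) (i : Fin (n+1)), ¬ mult (k : Exp n) i →
      (X i * g (k : Exp n) = ∑ l : ↥P, Pc k i l * g (l : Exp n)) ∧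
      ∀ l : ↥P, multPoly (l : Exp n) (Pc k i l))
    {x : ↥P × Exp n} (hx : x.2 ∈ Jsyz P x.1) :
    IsHomogV (ddeg P) (uV P Pc x) (mdeg P x) := by
  classical
  obtain ⟨l, η⟩ := x
  set i := maxv η with hi
  set δ := η - Finsupp.single i 1 with hδdef
  have hne : η.support.Nonempty := jsyz_nonempty hx
  have hnm : ¬ mult (l : Exp n) i := maxv_nonmult hx
  have hdecomp : δ + Finsupp.single i 1 = η := by
    rw [hδdef, hi, add_comm]
    exact single_add_sub hne
  have hPcl := hPc l i hnm
  have hdegs := pc_homog hT hP hMS hPcl.1 hPcl.2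
  have hdegη : degE η = degE δ + 1 := by
    rw [← hdecomp, degE_add, degE_single]
  intro k β hβ
  have hcompk : (uV P Pc (l, η)) k
      = -(monomial δ 1 * Pc l i k) + termV A (δ + Finsupp.single i 1) l k := by
    have h := ssyz_apply Pc l i δ k
    rw [Pi.sub_apply] at h
    have h2 := sub_eq_iff_eq_add.mp h
    rw [uV, if_pos hx]
    simp only [← hi, ← hδdef]
    exact h2
  rw [hcompk] at hβ
  rcases Finset.mem_union.mp (MvPolynomial.support_add hβ) with h | h
  · rw [support_neg] at h
    obtain ⟨β', hβ', rfl⟩ := support_monomial_mul' h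
    have := hdegs k β' hβ'
    simp only [mdeg, ddeg, degE_add]
    push_cast
    omega
  · rw [termV, Pi.single_apply] at h
    split_ifs at h with hk
    · rw [support_monomial_subset' h, hk, hdecomp]
      simp only [mdeg, ddeg]
    · simp at h

theorem span_termV_le_span_uV (hT : IsMonomialIdeal T) (hP : IsPommaretBasis P T)
    (hMS : IsMarkedSetI T P g)
    (Pc : ↥P → Fin (n+1) → ↥P → MvPolynomial (Fin (n+1)) A)
    (hPc : ∀ (k : ↥P) (i : Fin (n+1)), ¬ mult (k : Exp n) i →
      (X i * g (k : Exp n) = ∑ l : ↥P, Pc k i l * g (l : Exp n)) ∧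
      ∀ l : ↥P, multPoly (l : Exp n) (Pc k i l)) (s : ℤ) :
    Submodule.span A ((fun x : ↥P × Exp n => termV A x.2 x.1) '' {x | mdeg P x = s})
      ≤ Submodule.span A (uV P Pc '' {x | mdeg P x = s}) := by
  rw [Submodule.span_le]
  rintro v ⟨x, hx, rfl⟩
  have h := V_span hT hP hMS Pc hPc x
  rw [Set.mem_setOf_eq] at hx
  rw [hx] at h
  exact h

theorem span_termV_le_span_uV_univ (hT : IsMonomialIdeal T) (hP : IsPommaretBasis P T)
    (hMS : IsMarkedSetI T P g)
    (Pc : ↥P → Fin (n+1) → ↥P → MvPolynomial (Fin (n+1)) A)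
    (hPc : ∀ (k : ↥P) (i : Fin (n+1)), ¬ mult (k : Exp n) i →
      (X i * g (k : Exp n) = ∑ l : ↥P, Pc k i l * g (l : Exp n)) ∧
      ∀ l : ↥P, multPoly (l : Exp n) (Pc k i l)) :
    Submodule.span A ((fun x : ↥P × Exp n => termV A x.2 x.1) '' Set.univ)
      ≤ Submodule.span A (uV P Pc '' Set.univ) := by
  rw [Submodule.span_le]
  rintro v ⟨x, _, rfl⟩
  have h := V_span hT hP hMS Pc hPc x
  exact Submodule.span_mono (Set.image_mono (Set.subset_univ _)) h

end Final
theorem mem_homogCompV {A : Type*} [CommRing A] {κ : Type*} [Fintype κ] [DecidableEq κ]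
    {d : κ → ℤ} {v : κ → MvPolynomial (Fin (n+1)) A} {s : ℤ} :
    v ∈ homogCompV A d s ↔ IsHomogV d v s := Iff.rfl

theorem statement18' {n : ℕ} {A : Type*} [CommRing A]
    (T : Set (Exp n)) (P : Finset (Exp n))
    (hT : IsMonomialIdeal T) (hP : IsPommaretBasis P T)
    (g : Exp n → MvPolynomial (Fin (n+1)) A) (hG : IsMarkedBasisI T P g)
    (Pc : ↥P → Fin (n+1) → ↥P → MvPolynomial (Fin (n+1)) A)
    (hPc : ∀ (k : ↥P) (i : Fin (n+1)), ¬ mult (k : Exp n) i →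
      (X i * g (k : Exp n) = ∑ l : ↥P, Pc k i l * g (l : Exp n)) ∧
      ∀ l : ↥P, multPoly (l : Exp n) (Pc k i l)) :
    ∃ gs : Exp n → ↥P → (↥P → MvPolynomial (Fin (n+1)) A),
      IsMarkedSetV (ddeg P) (Jsyz P) (Psyz P) gs ∧
      (∀ (k : ↥P) (i : Fin (n+1)), ¬ mult (k : Exp n) i →
        gs (Finsupp.single i 1) k = Ssyz P Pc k i) ∧
      MarkedBasisProp (ddeg P) (Jsyz P) (Psyz P) gs ∧
      GmodS (Psyz P) gs = LinearMap.ker (syzMap P g) := by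
  classical
  obtain ⟨hMS, -⟩ := hG
  have hGK : GmodS (Psyz P) (gsdef P Pc) ≤ LinearMap.ker (syzMap P g) := by
    rw [GmodS, Submodule.span_le]
    rintro v ⟨k, α, hα, rfl⟩
    obtain ⟨i, hnm, rfl⟩ := psyz_mem hα
    rw [SetLike.mem_coe, LinearMap.mem_ker, gsdef_single P Pc hnm,
      syzMap_ssyz Pc (hPc k i hnm).1]
  refine ⟨gsdef P Pc, ?_, ?_, ?_, ?_⟩
  · -- (1) marked set
    intro k α hα l β hβ
    obtain ⟨i, hnm, rfl⟩ := psyz_mem hα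
    rw [gsdef_single P Pc hnm] at hβ
    have hcomp : ((Ssyz P Pc k i - termV A (Finsupp.single i 1) k :
        ↥P → MvPolynomial (Fin (n+1)) A)) l = -(Pc k i l) := by
      simp only [Pi.sub_apply, Ssyz, termV, Pi.single_apply]
      by_cases hl : l = k
      · rw [if_pos hl, if_pos hl]
        have hX : (monomial (Finsupp.single i 1) (1:A)) = X i := rfl
        rw [hX]
        ring
      · rw [if_neg hl, if_neg hl]
        ring
    rw [hcomp, support_neg] at hβ
    have hPcl := hPc k i hnm
    refine ⟨not_mem_jsyz_of_multExp (hPcl.2 l β hβ), ?_⟩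
    have hdeg := pc_homog hT hP hMS hPcl.1 hPcl.2 l β hβ
    simp only [ddeg, degE_single]
    push_cast
    omega
  · -- (2) pinning
    exact fun k i hnm => gsdef_single P Pc hnm
  · -- (3) marked basis
    intro s
    constructor
    · apply le_antisymm
      · intro v hv
        have hv' : IsHomogV (ddeg P) v s := hv
        have h1 : v ∈ Submodule.span A
            ((fun x : ↥P × Exp n => termV A x.2 x.1) '' {x | mdeg P x = s}) :=
          mem_span_termV (fun l' β hβ => hv' l' β hβ)
        have h2 := span_termV_le_span_uV hT hP hMS Pc hPc s h1
        have h3 : Submodule.span A (uV P Pc '' {x | mdeg P x = s})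
            ≤ GmodDeg (ddeg P) (Psyz P) (gsdef P Pc) s
              ⊔ Submodule.span A (NUTermsDeg A (ddeg P) (Jsyz P) s) := by
          rw [Submodule.span_le]
          rintro w ⟨x, hx, rfl⟩
          rw [Set.mem_setOf_eq] at hx
          by_cases hxJ : x.2 ∈ Jsyz P x.1
          · refine SetLike.mem_coe.mpr (Submodule.mem_sup_left (Submodule.mem_inf.mpr ⟨?_, ?_⟩))
            · exact Submodule.restrictScalars_mem _ _ _ |>.mpr (uV_T_mem_gmod Pc hxJ)
            · rw [mem_homogCompV, ← hx]
              exact uV_T_homog hT hP hMS Pc hPc hxJ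
          · refine SetLike.mem_coe.mpr (Submodule.mem_sup_right (Submodule.subset_span ?_))
            exact ⟨x.1, x.2, hxJ, hx, by rw [uV, if_neg hxJ]⟩
        exact h3 h2
      · apply sup_le
        · exact inf_le_right
        · rw [Submodule.span_le]
          rintro w ⟨k, α, hαJ, hdeg, rfl⟩
          exact SetLike.mem_coe.mpr (mem_homogCompV.mpr (termV_homog hdeg))
    · rw [eq_bot_iff]
      intro w hw
      obtain ⟨hw1, hw2⟩ := Submodule.mem_inf.mp hw
      obtain ⟨hwG, hwH⟩ := Submodule.mem_inf.mp hw1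
      have hker : syzMap P g w = 0 :=
        LinearMap.mem_ker.mp (hGK ((Submodule.restrictScalars_mem _ _ _).mp hwG))
      have hw_homog : IsHomogV (ddeg P) w s := hwH
      have h1 : w ∈ Submodule.span A (uV P Pc '' {x | mdeg P x = s}) :=
        span_termV_le_span_uV hT hP hMS Pc hPc s
          (mem_span_termV (fun l' β hβ => hw_homog l' β hβ))
      obtain ⟨c1, -, hc1⟩ := rep_of_mem_span Pc h1
      have hc1N := ker_coeffs hT hP hMS Pc hPc hker c1 hc1
      have h2 : w ∈ Submodule.span A (uV P Pc '' {x : ↥P × Exp n | x.2 ∉ Jsyz P x.1}) := by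
        refine Submodule.span_le.mpr ?_ hw2
        rintro v ⟨k, α, hαJ, hdeg, rfl⟩
        exact Submodule.subset_span ⟨(k, α), hαJ, by rw [uV, if_neg hαJ]⟩
      obtain ⟨c2, hc2supp, hc2⟩ := rep_of_mem_span Pc h2
      have e1 : ∑ x ∈ c1.support ∪ c2.support, c1 x • uV P Pc x = w := by
        rw [← Finset.sum_subset Finset.subset_union_left
          (fun x _ hx => by rw [Finsupp.notMem_support_iff.mp hx, zero_smul])]
        exact hc1
      have e2 : ∑ x ∈ c1.support ∪ c2.support, c2 x • uV P Pc x = w := by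
        rw [← Finset.sum_subset Finset.subset_union_right
          (fun x _ hx => by rw [Finsupp.notMem_support_iff.mp hx, zero_smul])]
        exact hc2
      have hsum : ∑ x ∈ c1.support ∪ c2.support,
          (c1 x - c2 x) • uV P Pc (id x) = 0 := by
        have : ∀ x ∈ c1.support ∪ c2.support, (c1 x - c2 x) • uV P Pc (id x)
            = c1 x • uV P Pc x - c2 x • uV P Pc x := by
          intro x _
          rw [sub_smul, id]
        rw [Finset.sum_congr rfl this, Finset.sum_sub_distrib, e1, e2, sub_self]
      have hz := V_indep hT hP hMS Pc hPc (c1.support ∪ c2.support) id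
        (Set.injOn_id _) (fun x => c1 x - c2 x) hsum
      have hc2z : ∀ x ∈ c2.support, c2 x = 0 := by
        intro x hx
        have hxN : x.2 ∉ Jsyz P x.1 := hc2supp hx
        have h12 : c1 x = c2 x := sub_eq_zero.mp (hz x (Finset.mem_union_right _ hx))
        by_cases hx1 : x ∈ c1.support
        · rw [← h12]
          exact hc1N x hx1 hxN
        · rw [← h12]
          exact Finsupp.notMem_support_iff.mp hx1
      rw [Submodule.mem_bot, ← hc2]
      apply Finset.sum_eq_zero
      intro x hx
      rw [hc2z x hx, zero_smul]
  · -- (4) kernel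
    apply le_antisymm hGK
    intro v hv
    rw [LinearMap.mem_ker] at hv
    have h1 : v ∈ Submodule.span A (uV P Pc '' Set.univ) := by
      apply span_termV_le_span_uV_univ hT hP hMS Pc hPc
      exact mem_span_termV (fun l' β hβ => Set.mem_univ _)
    obtain ⟨c, -, hc⟩ := rep_of_mem_span Pc h1
    have hcN := ker_coeffs hT hP hMS Pc hPc hv c hc
    rw [← hc]
    apply Submodule.sum_mem
    intro x hx
    by_cases hxJ : x.2 ∈ Jsyz P x.1
    · rw [← algebraMap_smul (MvPolynomial (Fin (n+1)) A) (c x)]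
      exact Submodule.smul_mem _ _ (uV_T_mem_gmod Pc hxJ)
    · rw [hcN x hx hxJ, zero_smul]
      exact Submodule.zero_mem _

/-- Theorem `markedschreyer`, marked Schreyer theorem: `G_Syz` is a
`P(U)`-marked basis of `Syz(G)`; in particular `Syz(G)` is generated by `G_Syz`. -/
theorem statement18 {n : ℕ} {A : Type*} [CommRing A] [IsNoetherianRing A]
    (T : Set (Exp n)) (P : Finset (Exp n))
    (hT : IsMonomialIdeal T) (hP : IsPommaretBasis P T)
    (g : Exp n → MvPolynomial (Fin (n+1)) A) (hG : IsMarkedBasisI T P g)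
    (Pc : ↥P → Fin (n+1) → ↥P → MvPolynomial (Fin (n+1)) A)
    (hPc : ∀ (k : ↥P) (i : Fin (n+1)), ¬ mult (k : Exp n) i →
      (X i * g (k : Exp n) = ∑ l : ↥P, Pc k i l * g (l : Exp n)) ∧
      ∀ l : ↥P, multPoly (l : Exp n) (Pc k i l)) :
    ∃ gs : Exp n → ↥P → (↥P → MvPolynomial (Fin (n+1)) A),
      IsMarkedSetV (ddeg P) (Jsyz P) (Psyz P) gs ∧
      (∀ (k : ↥P) (i : Fin (n+1)), ¬ mult (k : Exp n) i →
        gs (Finsupp.single i 1) k = Ssyz P Pc k i) ∧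
      MarkedBasisProp (ddeg P) (Jsyz P) (Psyz P) gs ∧
      GmodS (Psyz P) gs = LinearMap.ker (syzMap P g) := by
  exact statement18' T P hT hP g hG Pc hPc


end MB
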